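/- Let V be a regular vine on a finite set A with n = |A| ≥ 2. Then V is a D-vine if and only if there is an enumeration c_1,…,c_n of A such that {c_1,…,c_k} ∈ V and {c_{n−k+1},…,c_n} ∈ V for all 1 ≤ k ≤ n, i.e. both {c_1} ⊆ {c_1,c_2} ⊆ ⋯ ⊆ {c_1,…,c_n} and {c_n} ⊆ {c_{n−1},c_n} ⊆ ⋯ ⊆ {c_1,…,c_n} are maximal chains in V. -/

import Mathlib

variable {α : Type*} [DecidableEq α]

/-- `T` is covered by `S` in the family `V`, ordered by inclusion. -/
def CoversIn (V : Set (Finset α)) (T S : Finset α) : Prop :=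
  T ∈ V ∧ S ∈ V ∧ T ⊂ S ∧ ∀ U ∈ V, T ⊂ U → U ⊂ S → False

/-- `S` is a minimal element of the family `V`, ordered by inclusion. -/
def MinimalIn (V : Set (Finset α)) (S : Finset α) : Prop :=
  S ∈ V ∧ ∀ T ∈ V, T ⊆ S → T = S

/-- `C` is a maximal chain of the family `V`, ordered by inclusion. -/
def IsMaxChainIn (V C : Set (Finset α)) : Prop :=
  C ⊆ V ∧ IsChain (· ⊆ ·) C ∧ ∀ S ∈ V, IsChain (· ⊆ ·) (insert S C) → S ∈ C

/-- The `i`-th associated graph of a family `V`: vertices are the elements of `V`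
of cardinality `i`, and each element of `V` of cardinality `i+1` is an edge
joining the two elements it covers. -/
def vineGraph (V : Set (Finset α)) (i : ℕ) :
    SimpleGraph {S : Finset α // S ∈ V ∧ S.card = i} where
  Adj S T := S ≠ T ∧ ∃ W ∈ V, W.card = i + 1 ∧ CoversIn V S.1 W ∧ CoversIn V T.1 W
  symm := by
    constructor
    rintro S T ⟨h, W, hW, hc, h1, h2⟩
    exact ⟨h.symm, W, hW, hc, h2, h1⟩
  loopless := by
    constructor
    rintro S ⟨h, -⟩
    exact h rfl

/-- A regular vine on a finite set `A` (poset definition): a family of nonempty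
subsets of `A` such that (1) all maximal chains have length `|A| - 1` and all
minimal elements are singletons, (2) there are exactly `|A|` minimal elements,
(3) every non-minimal element covers exactly two elements, (4) each associated
graph is a tree, and (5) proximity holds. -/
def IsRegularVine (A : Finset α) (V : Set (Finset α)) : Prop :=
  (∀ S ∈ V, S ⊆ A ∧ S.Nonempty) ∧
  (∀ C : Set (Finset α), IsMaxChainIn V C → C.ncard = A.card) ∧
  (∀ S, MinimalIn V S → S.card = 1) ∧
  {S | MinimalIn V S}.ncard = A.card ∧
  (∀ S ∈ V, (∃ T ∈ V, T ⊂ S) → {T | CoversIn V T S}.ncard = 2) ∧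
  (∀ i : ℕ, 1 ≤ i → i ≤ A.card - 1 → (vineGraph V i).IsTree) ∧
  (∀ S ∈ V, ∀ T ∈ V, S ≠ T → S.card = T.card → 2 ≤ S.card →
    (∃ W, CoversIn V S W ∧ CoversIn V T W) → ∃ U, CoversIn V U S ∧ CoversIn V U T)

/-- A simple graph is a path graph if its vertices can be enumerated by a
duplicate-free list covering all vertices such that adjacency holds exactly
between consecutive entries. -/
def IsPathGraph {β : Type*} (G : SimpleGraph β) : Prop :=
  ∃ l : List β, l.Nodup ∧ (∀ v : β, v ∈ l) ∧
    ∀ u v : β, G.Adj u v ↔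
      ∃ i : ℕ, (l[i]? = some u ∧ l[i + 1]? = some v) ∨
        (l[i]? = some v ∧ l[i + 1]? = some u)

/-- A simple graph is a star graph if there is a center adjacent exactly to
all other vertices, with no further edges. -/
def IsStarGraph {β : Type*} (G : SimpleGraph β) : Prop :=
  ∃ c : β, ∀ u v : β, G.Adj u v ↔ ((u = c ∧ v ≠ c) ∨ (v = c ∧ u ≠ c))

/-- A D-vine: a regular vine all of whose associated trees are path graphs. -/
def IsDVine (A : Finset α) (V : Set (Finset α)) : Prop :=
  IsRegularVine A V ∧
    ∀ i : ℕ, 1 ≤ i → i ≤ A.card - 1 → IsPathGraph (vineGraph V i)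

/-- A C-vine: a regular vine all of whose associated trees are star graphs. -/
def IsCVine (A : Finset α) (V : Set (Finset α)) : Prop :=
  IsRegularVine A V ∧
    ∀ i : ℕ, 1 ≤ i → i ≤ A.card - 1 → IsStarGraph (vineGraph V i)

section Aux
set_option linter.unusedSectionVars false

variable {α : Type*} [DecidableEq α] {A : Finset α} {V : Set (Finset α)}

lemma vfinite (hV : IsRegularVine A V) : V.Finite := by
  apply Set.Finite.subset (Finset.finite_toSet A.powerset)
  intro S hS
  simpa [Finset.mem_powerset] using (hV.1 S hS).1

lemma coversIn_of_card {T S : Finset α} (hT : T ∈ V) (hS : S ∈ V) (hsub : T ⊂ S)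
    (hcard : S.card ≤ T.card + 1) : CoversIn V T S := by
  refine ⟨hT, hS, hsub, fun U hU h1 h2 => ?_⟩
  have := Finset.card_lt_card h1
  have := Finset.card_lt_card h2
  omega

lemma exists_maxChainIn (C0 : Set (Finset α)) (hC0 : C0 ⊆ V) (hchain : IsChain (· ⊆ ·) C0) :
    ∃ C, C0 ⊆ C ∧ IsMaxChainIn V C := by
  set r : ↥V → ↥V → Prop := fun x y => x.1 ⊆ y.1 with hr
  set s : Set ↥V := {x | x.1 ∈ C0} with hs
  have hcs : IsChain r s := by
    intro x hx y hy hxy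
    have := hchain hx hy (fun h => hxy (Subtype.ext h))
    exact this
  obtain ⟨t, ht, hst⟩ := hcs.exists_maxChain
  refine ⟨Subtype.val '' t, ?_, ?_, ?_, ?_⟩
  · intro S hSC0
    exact ⟨⟨S, hC0 hSC0⟩, hst hSC0, rfl⟩
  · rintro S ⟨x, hx, rfl⟩
    exact x.2
  · rintro S ⟨x, hx, rfl⟩ T ⟨y, hy, rfl⟩ hne
    exact ht.1 hx hy (fun h => hne (congrArg Subtype.val h))
  · intro S hSV hins
    have hchain' : IsChain r (insert ⟨S, hSV⟩ t) := by
      intro x hx y hy hxy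
      have hx' : x.1 ∈ insert S (Subtype.val '' t) := by
        rcases hx with h | h
        · left; rw [h]
        · right; exact ⟨x, h, rfl⟩
      have hy' : y.1 ∈ insert S (Subtype.val '' t) := by
        rcases hy with h | h
        · left; rw [h]
        · right; exact ⟨y, h, rfl⟩
      exact hins hx' hy' (fun h => hxy (Subtype.ext h))
    have := ht.2 hchain' (Set.subset_insert _ _)
    have hmem : (⟨S, hSV⟩ : ↥V) ∈ t := by
      rw [this]; exact Set.mem_insert _ _
    exact ⟨⟨S, hSV⟩, hmem, rfl⟩

lemma maxChain_exists_card (hV : IsRegularVine A V) {C : Set (Finset α)} (hC : IsMaxChainIn V C)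
    {k : ℕ} (hk1 : 1 ≤ k) (hkn : k ≤ A.card) : ∃ S ∈ C, S.card = k := by
  have hfin : C.Finite := (vfinite hV).subset hC.1
  have hncard : C.ncard = A.card := hV.2.1 C hC
  set F := hfin.toFinset with hF
  have hFcard : F.card = A.card := by
    rw [← hncard, Set.ncard_eq_toFinset_card _ hfin]
  have hinj : Set.InjOn Finset.card (F : Set (Finset α)) := by
    intro S hS T hT hcard
    simp only [hF, Finset.mem_coe, Set.Finite.mem_toFinset] at hS hT
    by_contra hne
    rcases hC.2.1 hS hT hne with h | h
    · have := Finset.card_lt_card (lt_of_le_of_ne h (fun he => hne he))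
      omega
    · have := Finset.card_lt_card (lt_of_le_of_ne h (fun he => hne he.symm))
      omega
  have himsub : F.image Finset.card ⊆ Finset.Icc 1 A.card := by
    intro k hk
    rcases Finset.mem_image.mp hk with ⟨S, hS, rfl⟩
    simp only [hF, Set.Finite.mem_toFinset] at hS
    have hSV := hC.1 hS
    have h1 := (hV.1 S hSV).2
    have h2 := Finset.card_le_card (hV.1 S hSV).1
    simp only [Finset.mem_Icc]
    exact ⟨Finset.card_pos.mpr h1, h2⟩
  have him : F.image Finset.card = Finset.Icc 1 A.card := by
    apply Finset.eq_of_subset_of_card_le himsub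
    rw [Finset.card_image_of_injOn hinj, hFcard, Nat.card_Icc]; omega
  have : k ∈ F.image Finset.card := by
    rw [him]; simp only [Finset.mem_Icc]; exact ⟨hk1, hkn⟩
  rcases Finset.mem_image.mp this with ⟨S, hS, hSk⟩
  exact ⟨S, (Set.Finite.mem_toFinset hfin).mp hS, hSk⟩

lemma A_mem (hV : IsRegularVine A V) (hA : 1 ≤ A.card) : A ∈ V := by
  have hne : {S | MinimalIn V S}.Nonempty := by
    apply Set.nonempty_of_ncard_ne_zero
    rw [hV.2.2.2.1]; omega
  obtain ⟨S, hS⟩ := hne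
  obtain ⟨C, hsub, hC⟩ := exists_maxChainIn {S} (by simpa using hS.1) (Set.Subsingleton.isChain (by simp))
  obtain ⟨T, hT, hTcard⟩ := maxChain_exists_card hV hC hA le_rfl
  have hTV := hC.1 hT
  have : T = A := Finset.eq_of_subset_of_card_le (hV.1 T hTV).1 (by omega)
  rwa [← this]

end Aux
section Aux2
set_option linter.unusedSectionVars false

variable {α : Type*} [DecidableEq α] {A : Finset α} {V : Set (Finset α)}

lemma exists_above (hV : IsRegularVine A V) {T : Finset α} (hT : T ∈ V) (h : T.card < A.card) :
    ∃ S ∈ V, T ⊂ S ∧ S.card = T.card + 1 := by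
  have hAV := A_mem hV (by omega)
  have hchain : IsChain (· ⊆ ·) ({T, A} : Set (Finset α)) := by
    intro x hx y hy hxy
    rcases hx with rfl | rfl <;> rcases hy with rfl | rfl <;>
      first | exact absurd rfl hxy | (left; exact (hV.1 _ hT).1) |
        (right; exact (hV.1 _ hT).1) | (left; rfl)
  obtain ⟨C, hsub, hC⟩ := exists_maxChainIn (V := V) {T, A} (by
    intro x hx
    simp only [Set.mem_insert_iff, Set.mem_singleton_iff] at hx
    rcases hx with rfl | rfl
    · exact hT
    · exact hAV) hchain
  obtain ⟨S, hS, hScard⟩ := maxChain_exists_card hV hC (by omega) (by omega) (k := T.card + 1)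
  have hSV := hC.1 hS
  have hTC : T ∈ C := hsub (by left; rfl)
  refine ⟨S, hSV, ?_, hScard⟩
  have hne : T ≠ S := by intro h; rw [h] at hScard; omega
  rcases hC.2.1 hTC hS hne with h1 | h1
  · exact lt_of_le_of_ne h1 hne
  · have := Finset.card_le_card h1; omega

lemma exists_below (hV : IsRegularVine A V) {T : Finset α} (hT : T ∈ V) (h2 : 2 ≤ T.card) :
    ∃ S ∈ V, S ⊂ T := by
  obtain ⟨C, hsub, hC⟩ := exists_maxChainIn (V := V) {T} (by simpa using hT)
    (Set.Subsingleton.isChain (by simp))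
  have h1n : 1 ≤ A.card := le_trans (by omega) (Finset.card_le_card (hV.1 T hT).1)
  obtain ⟨S, hS, hScard⟩ := maxChain_exists_card hV hC le_rfl h1n (k := 1)
  have hSV := hC.1 hS
  have hTC : T ∈ C := hsub rfl
  refine ⟨S, hSV, ?_⟩
  have hne : S ≠ T := by intro h; rw [h] at hScard; omega
  rcases hC.2.1 hS hTC hne with h1 | h1
  · exact lt_of_le_of_ne h1 hne
  · have := Finset.card_le_card h1; omega

lemma card_of_covers (hV : IsRegularVine A V) {T S : Finset α} (h : CoversIn V T S) :
    S.card = T.card + 1 := by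
  obtain ⟨hT, hS, hsub, hmax⟩ := h
  have hlt := Finset.card_lt_card hsub
  have hchain : IsChain (· ⊆ ·) ({T, S} : Set (Finset α)) := by
    intro x hx y hy hxy
    rcases hx with rfl | rfl <;> rcases hy with rfl | rfl <;>
      first | exact absurd rfl hxy | (left; exact hsub.1) | (right; exact hsub.1) | (left; rfl)
  obtain ⟨C, hsubC, hC⟩ := exists_maxChainIn (V := V) {T, S} (by
    intro x hx
    simp only [Set.mem_insert_iff, Set.mem_singleton_iff] at hx
    rcases hx with rfl | rfl
    · exact hT
    · exact hS) hchain
  have hSA := Finset.card_le_card (hV.1 S hS).1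
  obtain ⟨U, hU, hUcard⟩ := maxChain_exists_card hV hC (by omega) (by omega) (k := T.card + 1)
  have hUV := hC.1 hU
  have hTC : T ∈ C := hsubC (by left; rfl)
  have hSC : S ∈ C := hsubC (by right; rfl)
  have hTU : T ⊂ U := by
    have hne : T ≠ U := by intro h; rw [h] at hUcard; omega
    rcases hC.2.1 hTC hU hne with h1 | h1
    · exact lt_of_le_of_ne h1 hne
    · have := Finset.card_le_card h1; omega
  by_cases hUS : U = S
  · rw [hUS] at hUcard; omega
  rcases hC.2.1 hU hSC hUS with h1 | h1
  · exact absurd (hmax U hUV hTU (lt_of_le_of_ne h1 hUS)) (by simp)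
  · have := Finset.card_le_card h1; omega

lemma covers_pair (hV : IsRegularVine A V) {S : Finset α} (hS : S ∈ V) (h2 : 2 ≤ S.card) :
    ∃ T₁ T₂, T₁ ≠ T₂ ∧ CoversIn V T₁ S ∧ CoversIn V T₂ S ∧ T₁ ∪ T₂ = S ∧
      ∀ T, CoversIn V T S → T = T₁ ∨ T = T₂ := by
  obtain ⟨T₀, hT₀V, hT₀⟩ := exists_below hV hS h2
  have h2' := hV.2.2.2.2.1 S hS ⟨T₀, hT₀V, hT₀⟩
  obtain ⟨T₁, T₂, hne, hset⟩ := Set.ncard_eq_two.mp h2'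
  have hc1 : CoversIn V T₁ S := by
    have : T₁ ∈ {T | CoversIn V T S} := by rw [hset]; left; rfl
    exact this
  have hc2 : CoversIn V T₂ S := by
    have : T₂ ∈ {T | CoversIn V T S} := by rw [hset]; right; rfl
    exact this
  have hcard1 := card_of_covers hV hc1
  have hcard2 := card_of_covers hV hc2
  refine ⟨T₁, T₂, hne, hc1, hc2, ?_, ?_⟩
  · have hsub : T₁ ∪ T₂ ⊆ S := Finset.union_subset hc1.2.2.1.1 hc2.2.2.1.1
    have hT21 : ¬ T₂ ⊆ T₁ := by
      intro h
      exact hne (Finset.eq_of_subset_of_card_le h (by omega)).symm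
    obtain ⟨x, hx2, hx1⟩ := Finset.not_subset.mp hT21
    have : T₁.card < (T₁ ∪ T₂).card := by
      apply Finset.card_lt_card
      refine ⟨Finset.subset_union_left, ?_⟩
      intro h
      exact hx1 (h (Finset.mem_union_right _ hx2))
    exact (Finset.eq_of_subset_of_card_le hsub (by omega)).symm ▸ rfl
  · intro T hT
    have : T ∈ ({T₁, T₂} : Set (Finset α)) := hset ▸ hT
    simpa using this

end Aux2
section Aux3
set_option linter.unusedSectionVars false

variable {α : Type*} [DecidableEq α] {A : Finset α} {V : Set (Finset α)}

/-- The set of elements of `V` of cardinality `i`. -/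
def lvl (V : Set (Finset α)) (i : ℕ) : Set (Finset α) := {S | S ∈ V ∧ S.card = i}

lemma mem_lvl {S : Finset α} {i : ℕ} : S ∈ lvl V i ↔ S ∈ V ∧ S.card = i := Iff.rfl

lemma lvl_finite (hV : IsRegularVine A V) (i : ℕ) : (lvl V i).Finite :=
  (vfinite hV).subset (fun _ hS => hS.1)

lemma lvl_one_eq (hV : IsRegularVine A V) : lvl V 1 = {S | MinimalIn V S} := by
  ext S
  constructor
  · rintro ⟨hS, h1⟩
    refine ⟨hS, fun T hT hsub => ?_⟩
    have hT1 : 1 ≤ T.card := Finset.card_pos.mpr (hV.1 T hT).2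
    exact Finset.eq_of_subset_of_card_le hsub (by omega)
  · intro hmin
    exact ⟨hmin.1, hV.2.2.1 S hmin⟩

lemma lvl_one_ncard (hV : IsRegularVine A V) : (lvl V 1).ncard = A.card := by
  rw [lvl_one_eq hV]; exact hV.2.2.2.1

lemma singleton_mem (hV : IsRegularVine A V) {a : α} (ha : a ∈ A) : {a} ∈ V := by
  classical
  set B := A.filter (fun a => {a} ∈ V) with hB
  have hsub : lvl V 1 ⊆ ↑(B.image (fun a => ({a} : Finset α))) := by
    rintro S ⟨hS, h1⟩
    obtain ⟨b, rfl⟩ := Finset.card_eq_one.mp h1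
    have hbA : b ∈ A := (hV.1 _ hS).1 (Finset.mem_singleton_self b)
    exact Finset.mem_coe.mpr (Finset.mem_image_of_mem _ (Finset.mem_filter.mpr ⟨hbA, hS⟩))
  have h1 : A.card ≤ (B.image (fun a => ({a} : Finset α))).card := by
    rw [← lvl_one_ncard hV, ← Set.ncard_coe_finset]
    exact Set.ncard_le_ncard hsub (Finset.finite_toSet _)
  have h2 : (B.image (fun a => ({a} : Finset α))).card ≤ B.card := Finset.card_image_le
  have h3 : B.card ≤ A.card := Finset.card_le_card (Finset.filter_subset _ _)
  have : B = A := Finset.eq_of_subset_of_card_le (Finset.filter_subset _ _) (by omega)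
  have : a ∈ B := this ▸ ha
  exact (Finset.mem_filter.mp this).2

lemma lvl_succ_ncard (hV : IsRegularVine A V) {i : ℕ} (h1 : 1 ≤ i) (h2 : i ≤ A.card - 1) :
    (lvl V i).ncard = (lvl V (i+1)).ncard + 1 := by
  classical
  have htree := hV.2.2.2.2.2.1 i h1 h2
  haveI : Fintype {S : Finset α // S ∈ V ∧ S.card = i} :=
    Set.Finite.fintype (lvl_finite hV i)
  haveI : Fintype ↑(vineGraph V i).edgeSet := Set.Finite.fintype (Set.toFinite _)
  have hcard := htree.card_edgeFinset
  -- vertices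
  have hvert : (lvl V i).ncard = Fintype.card {S : Finset α // S ∈ V ∧ S.card = i} := by
    rw [← Nat.card_coe_set_eq, ← Nat.card_eq_fintype_card]
    exact Nat.card_congr (Equiv.subtypeEquivRight (fun _ => Iff.rfl))
  -- edges
  have hpair : ∀ W : ↥(lvl V (i+1)), ∃ p : Finset α × Finset α, p.1 ≠ p.2 ∧
      CoversIn V p.1 W.1 ∧ CoversIn V p.2 W.1 ∧ p.1 ∪ p.2 = W.1 ∧
      ∀ T, CoversIn V T W.1 → T = p.1 ∨ T = p.2 := by
    intro W
    obtain ⟨T₁, T₂, hne, hc1, hc2, hun, hall⟩ := covers_pair hV W.2.1 (by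
      have := W.2.2; omega)
    exact ⟨(T₁, T₂), hne, hc1, hc2, hun, hall⟩
  choose p hne hc1 hc2 hun hall using hpair
  have hm1 : ∀ W : ↥(lvl V (i+1)), (p W).1 ∈ V ∧ (p W).1.card = i := by
    intro W
    have := card_of_covers hV (hc1 W)
    have hW := W.2.2
    exact ⟨(hc1 W).1, by omega⟩
  have hm2 : ∀ W : ↥(lvl V (i+1)), (p W).2 ∈ V ∧ (p W).2.card = i := by
    intro W
    have := card_of_covers hV (hc2 W)
    have hW := W.2.2
    exact ⟨(hc2 W).1, by omega⟩
  set f : ↥(lvl V (i+1)) → ↑(vineGraph V i).edgeSet := fun W =>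
    ⟨s(⟨(p W).1, hm1 W⟩, ⟨(p W).2, hm2 W⟩), by
      rw [SimpleGraph.mem_edgeSet]
      exact ⟨fun h => hne W (congrArg Subtype.val h), W.1, W.2.1, W.2.2, hc1 W, hc2 W⟩⟩
    with hf
  have hbij : Function.Bijective f := by
    constructor
    · intro W W' hWW'
      have := congrArg Subtype.val hWW'
      simp only [hf] at this
      rw [Sym2.eq_iff] at this
      simp only [Subtype.mk.injEq] at this
      apply Subtype.ext
      rcases this with ⟨ha, hb⟩ | ⟨ha, hb⟩
      · rw [← hun W, ← hun W', ha, hb]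
      · rw [← hun W, ← hun W', ha, hb, Finset.union_comm]
    · rintro ⟨e, he⟩
      induction e using Sym2.ind with
      | _ u v =>
        rw [SimpleGraph.mem_edgeSet] at he
        obtain ⟨huv, W', hW'V, hW'card, hcu, hcv⟩ := he
        refine ⟨⟨W', hW'V, hW'card⟩, ?_⟩
        apply Subtype.ext
        simp only [hf]
        have huv' : u.1 ≠ v.1 := fun h => huv (Subtype.ext h)
        set W : ↥(lvl V (i+1)) := ⟨W', hW'V, hW'card⟩ with hW
        have hu := hall W u.1 hcu
        have hv := hall W v.1 hcv
        rw [Sym2.eq_iff]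
        rcases hu with hu | hu <;> rcases hv with hv | hv
        · exact absurd (hu.trans hv.symm) huv'
        · left; exact ⟨Subtype.ext hu.symm, Subtype.ext hv.symm⟩
        · right; exact ⟨Subtype.ext hv.symm, Subtype.ext hu.symm⟩
        · exact absurd (hu.trans hv.symm) huv'
  have hedge : (lvl V (i+1)).ncard = (vineGraph V i).edgeFinset.card := by
    rw [← Nat.card_coe_set_eq, Nat.card_eq_of_bijective f hbij,
      SimpleGraph.edgeFinset, Set.toFinset_card, ← Nat.card_eq_fintype_card]
  omega

lemma lvl_ncard (hV : IsRegularVine A V) (hA : 2 ≤ A.card) :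
    ∀ i, 1 ≤ i → i ≤ A.card → (lvl V i).ncard = A.card + 1 - i := by
  intro i hi
  induction i, hi using Nat.le_induction with
  | base => intro _; rw [lvl_one_ncard hV]; omega
  | succ i hi ih =>
    intro h
    have := lvl_succ_ncard hV hi (by omega)
    rw [ih (by omega)] at this
    omega
end Aux3
section Windows
set_option linter.unusedSectionVars false

variable {α : Type*} [DecidableEq α]

/-- Window of length `i` starting at `j` in the enumeration `g`. -/
def Wd (g : ℕ → α) (j i : ℕ) : Finset α := (Finset.Ico j (j+i)).image g

/-- The set of windows of length `i` inside `[0, n)`. -/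
def wins (g : ℕ → α) (n i : ℕ) : Set (Finset α) := {S | ∃ j, j + i ≤ n ∧ S = Wd g j i}

variable {g : ℕ → α} {n : ℕ}

lemma mem_Wd {a : α} {j i : ℕ} : a ∈ Wd g j i ↔ ∃ t, j ≤ t ∧ t < j + i ∧ g t = a := by
  simp [Wd, Finset.mem_image, Finset.mem_Ico, and_assoc]

lemma card_Wd (hg : Set.InjOn g (Set.Iio n)) {j i : ℕ} (h : j + i ≤ n) : (Wd g j i).card = i := by
  rw [Wd, Finset.card_image_of_injOn, Nat.card_Ico]
  · omega
  · intro s hs t ht hst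
    rw [Finset.coe_Ico, Set.mem_Ico] at hs ht
    exact hg (by simp; omega) (by simp; omega) hst

lemma Wd_mono {j i k l : ℕ} (h : Finset.Ico j (j+i) ⊆ Finset.Ico k (k+l)) :
    Wd g j i ⊆ Wd g k l := Finset.image_subset_image h

lemma Wd_reflect (hg : Set.InjOn g (Set.Iio n)) {j i k l : ℕ} (h1 : j + i ≤ n) (h2 : k + l ≤ n)
    (hsub : Wd g j i ⊆ Wd g k l) : Finset.Ico j (j+i) ⊆ Finset.Ico k (k+l) := by
  intro t ht
  rw [Finset.mem_Ico] at ht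
  have : g t ∈ Wd g k l := hsub (mem_Wd.mpr ⟨t, ht.1, ht.2, rfl⟩)
  obtain ⟨s, hs1, hs2, hst⟩ := mem_Wd.mp this
  have : s = t := hg (by simp; omega) (by simp; omega) hst
  rw [Finset.mem_Ico]; omega

lemma Wd_inj (hg : Set.InjOn g (Set.Iio n)) {j k i : ℕ} (hi : 1 ≤ i) (h1 : j + i ≤ n)
    (h2 : k + i ≤ n) (h : Wd g j i = Wd g k i) : j = k := by
  have s1 := Wd_reflect hg h1 h2 h.le
  have s2 := Wd_reflect hg h2 h1 h.ge
  have := s1 (Finset.mem_Ico.mpr (by omega : j ≤ j ∧ j < j + i))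
  have := s2 (Finset.mem_Ico.mpr (by omega : k ≤ k ∧ k < k + i))
  rw [Finset.mem_Ico] at *
  omega

lemma Wd_inter (hg : Set.InjOn g (Set.Iio n)) {j i k l : ℕ} (h1 : j + i ≤ n) (h2 : k + l ≤ n) :
    Wd g j i ∩ Wd g k l = (Finset.Ico j (j+i) ∩ Finset.Ico k (k+l)).image g := by
  ext a
  simp only [Finset.mem_inter, Finset.mem_image, Finset.mem_Ico, mem_Wd]
  constructor
  · rintro ⟨⟨t, ht1, ht2, rfl⟩, ⟨s, hs1, hs2, hst⟩⟩
    have : s = t := hg (by simp; omega) (by simp; omega) hst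
    exact ⟨t, ⟨⟨ht1, ht2⟩, by omega⟩, rfl⟩
  · rintro ⟨t, ⟨⟨ht1, ht2⟩, ht3, ht4⟩, rfl⟩
    exact ⟨⟨t, ht1, ht2, rfl⟩, ⟨t, ht3, ht4, rfl⟩⟩

lemma wins_eq_coe (hi : 1 ≤ i) (hin : i ≤ n) :
    wins g n i = ↑((Finset.range (n + 1 - i)).image (fun j => Wd g j i)) := by
  ext S
  simp only [wins, Set.mem_setOf_eq, Finset.coe_image, Set.mem_image, Finset.mem_coe,
    Finset.mem_range]
  constructor
  · rintro ⟨j, hj, rfl⟩; exact ⟨j, by omega, rfl⟩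
  · rintro ⟨j, hj, rfl⟩; exact ⟨j, by omega, rfl⟩

lemma wins_finite {i : ℕ} (hi : 1 ≤ i) (hin : i ≤ n) : (wins g n i).Finite := by
  rw [wins_eq_coe hi hin]; exact Finset.finite_toSet _

lemma wins_ncard (hg : Set.InjOn g (Set.Iio n)) {i : ℕ} (hi : 1 ≤ i) (hin : i ≤ n) :
    (wins g n i).ncard = n + 1 - i := by
  rw [wins_eq_coe hi hin, Set.ncard_coe_finset, Finset.card_image_of_injOn, Finset.card_range]
  intro j hj k hk h
  rw [Finset.coe_range, Set.mem_Iio] at hj hk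
  exact Wd_inj hg hi (by omega) (by omega) h

lemma mem_wins {S : Finset α} {i : ℕ} : S ∈ wins g n i ↔ ∃ j, j + i ≤ n ∧ S = Wd g j i := Iff.rfl

end Windows
section Down
set_option linter.unusedSectionVars false

variable {α : Type*} [DecidableEq α] {A : Finset α} {V : Set (Finset α)} {g : ℕ → α}

lemma lvl_eq_wins_down (hV : IsRegularVine A V) (hA : 2 ≤ A.card)
    (hg : Set.InjOn g (Set.Iio A.card))
    (hpre : ∀ k, 1 ≤ k → k ≤ A.card → Wd g 0 k ∈ V ∧ Wd g (A.card - k) k ∈ V) :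
    ∀ i, 1 ≤ i → i ≤ A.card → lvl V i = wins g A.card i := by
  set n := A.card with hn
  have main : ∀ d, ∀ i, 1 ≤ i → i + d = n → lvl V i = wins g n i := by
    intro d
    induction d using Nat.strong_induction_on with
    | _ d ih =>
      intro i hi hd
      have hsub : wins g n i ⊆ lvl V i := by
        rintro S ⟨j, hj, rfl⟩
        refine ⟨?_, card_Wd hg hj⟩
        rcases Nat.eq_zero_or_pos j with rfl | hj1
        · exact (hpre i hi (by omega)).1
        rcases eq_or_lt_of_le hj with heq | hlt
        · have : j = n - i := by omega
          rw [this]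
          exact (hpre i hi (by omega)).2
        -- middle case : 1 ≤ j and j + i < n
        have hS1 : Wd g (j-1) (i+1) ∈ V := by
          have := ih (n - (i+1)) (by omega) (i+1) (by omega) (by omega)
          have hmem : Wd g (j-1) (i+1) ∈ wins g n (i+1) := ⟨j-1, by omega, rfl⟩
          rw [← this] at hmem
          exact hmem.1
        have hS2 : Wd g j (i+1) ∈ V := by
          have := ih (n - (i+1)) (by omega) (i+1) (by omega) (by omega)
          have hmem : Wd g j (i+1) ∈ wins g n (i+1) := ⟨j, by omega, rfl⟩
          rw [← this] at hmem
          exact hmem.1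
        have hX : Wd g (j-1) (i+2) ∈ V := by
          have := ih (n - (i+2)) (by omega) (i+2) (by omega) (by omega)
          have hmem : Wd g (j-1) (i+2) ∈ wins g n (i+2) := ⟨j-1, by omega, rfl⟩
          rw [← this] at hmem
          exact hmem.1
        have hc1 : CoversIn V (Wd g (j-1) (i+1)) (Wd g (j-1) (i+2)) := by
          apply coversIn_of_card hS1 hX
          · apply lt_of_le_of_ne (Wd_mono (Finset.Ico_subset_Ico le_rfl (by omega)))
            intro h
            have := card_Wd hg (show (j-1) + (i+1) ≤ n by omega)
            have := card_Wd hg (show (j-1) + (i+2) ≤ n by omega)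
            rw [h] at *; omega
          · rw [card_Wd hg (by omega), card_Wd hg (by omega)]
        have hc2 : CoversIn V (Wd g j (i+1)) (Wd g (j-1) (i+2)) := by
          apply coversIn_of_card hS2 hX
          · apply lt_of_le_of_ne (Wd_mono (Finset.Ico_subset_Ico (by omega) (by omega)))
            intro h
            have := card_Wd hg (show j + (i+1) ≤ n by omega)
            have := card_Wd hg (show (j-1) + (i+2) ≤ n by omega)
            rw [h] at *; omega
          · rw [card_Wd hg (by omega), card_Wd hg (by omega)]
        have hne : Wd g (j-1) (i+1) ≠ Wd g j (i+1) := by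
          intro h
          have := Wd_inj hg (by omega) (by omega) (by omega) h
          omega
        obtain ⟨U, hU1, hU2⟩ := hV.2.2.2.2.2.2 _ hS1 _ hS2 hne
          (by rw [card_Wd hg (by omega), card_Wd hg (by omega)])
          (by rw [card_Wd hg (by omega)]; omega)
          ⟨Wd g (j-1) (i+2), hc1, hc2⟩
        have hUcard : U.card = i := by
          have := card_of_covers hV hU1
          have := card_Wd hg (show (j-1) + (i+1) ≤ n by omega)
          omega
        have hUsub : U ⊆ Wd g j i := by
          have h1 : U ⊆ Wd g (j-1) (i+1) ∩ Wd g j (i+1) :=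
            Finset.subset_inter hU1.2.2.1.1 hU2.2.2.1.1
          rw [Wd_inter hg (by omega) (by omega)] at h1
          have hIco : Finset.Ico (j-1) (j-1+(i+1)) ∩ Finset.Ico j (j+(i+1))
              = Finset.Ico j (j+i) := by
            ext t; simp only [Finset.mem_inter, Finset.mem_Ico]; omega
          rwa [hIco] at h1
        have : U = Wd g j i := Finset.eq_of_subset_of_card_le hUsub
          (by rw [card_Wd hg (by omega)]; omega)
        rw [← this]
        exact hU1.1
      symm
      apply Set.eq_of_subset_of_ncard_le hsub _ (lvl_finite hV i)
      rw [lvl_ncard hV hA i hi (by omega), wins_ncard hg hi (by omega)]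
  intro i hi hin
  exact main (n - i) i hi (by omega)

lemma path_of_wins (hV : IsRegularVine A V) (hA : 2 ≤ A.card)
    (hg : Set.InjOn g (Set.Iio A.card))
    (hw : ∀ i, 1 ≤ i → i ≤ A.card → lvl V i = wins g A.card i) :
    ∀ i, 1 ≤ i → i ≤ A.card - 1 → IsPathGraph (vineGraph V i) := by
  intro i hi hin
  set n := A.card with hn
  set N := n + 1 - i with hN
  have hvert : ∀ j, j ≤ n - i → Wd g j i ∈ V ∧ (Wd g j i).card = i := by
    intro j hj
    have : Wd g j i ∈ lvl V i := by
      rw [hw i hi (by omega)]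
      exact ⟨j, by omega, rfl⟩
    exact this
  set f : ℕ → {S : Finset α // S ∈ V ∧ S.card = i} :=
    fun j => ⟨Wd g (min j (n-i)) i, hvert _ (min_le_right _ _)⟩ with hf
  have hfval : ∀ j ≤ n - i, (f j).1 = Wd g j i := by
    intro j hj
    simp only [hf]
    rw [min_eq_left hj]
  set l : List {S : Finset α // S ∈ V ∧ S.card = i} := (List.range N).map f with hl
  have hlen : l.length = N := by simp [hl]
  have hget : ∀ m < N, l[m]? = some (f m) := by
    intro m hm
    rw [hl, List.getElem?_map, List.getElem?_range hm, Option.map_some]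
  have hget' : ∀ m, N ≤ m → l[m]? = none := by
    intro m hm
    rw [List.getElem?_eq_none_iff]
    omega
  -- every vertex is f j for a unique j ≤ n - i
  have hsurj : ∀ v : {S : Finset α // S ∈ V ∧ S.card = i}, ∃ j, j ≤ n - i ∧ v = f j := by
    intro v
    have : v.1 ∈ lvl V i := v.2
    rw [hw i hi (by omega)] at this
    obtain ⟨j, hj, hv⟩ := this
    exact ⟨j, by omega, Subtype.ext (by rw [hfval j (by omega)]; exact hv)⟩
  have hfinj : ∀ j ≤ n - i, ∀ k ≤ n - i, f j = f k → j = k := by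
    intro j hj k hk h
    have : Wd g j i = Wd g k i := by
      rw [← hfval j hj, ← hfval k hk, h]
    exact Wd_inj hg hi (by omega) (by omega) this
  -- adjacency characterization
  have hadj : ∀ j ≤ n - i, ∀ k ≤ n - i, ((vineGraph V i).Adj (f j) (f k) ↔ (k = j + 1 ∨ j = k + 1)) := by
    intro j hj k hk
    constructor
    · rintro ⟨hne, S, hSV, hScard, hcj, hck⟩
      have hjk : j ≠ k := fun h => hne (by rw [h])
      have hSlvl : S ∈ lvl V (i+1) := ⟨hSV, hScard⟩
      rw [hw (i+1) (by omega) (by omega)] at hSlvl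
      obtain ⟨m, hm, rfl⟩ := hSlvl
      have hrj : Finset.Ico j (j+i) ⊆ Finset.Ico m (m+(i+1)) := by
        apply Wd_reflect hg (by omega) (by omega)
        rw [← hfval j hj]
        exact hcj.2.2.1.1
      have hrk : Finset.Ico k (k+i) ⊆ Finset.Ico m (m+(i+1)) := by
        apply Wd_reflect hg (by omega) (by omega)
        rw [← hfval k hk]
        exact hck.2.2.1.1
      have h1 := hrj (Finset.mem_Ico.mpr (by omega : j ≤ j ∧ j < j+i))
      have h2 := hrj (Finset.mem_Ico.mpr (by omega : j ≤ j+i-1 ∧ j+i-1 < j+i))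
      have h3 := hrk (Finset.mem_Ico.mpr (by omega : k ≤ k ∧ k < k+i))
      have h4 := hrk (Finset.mem_Ico.mpr (by omega : k ≤ k+i-1 ∧ k+i-1 < k+i))
      rw [Finset.mem_Ico] at h1 h2 h3 h4
      omega
    · intro h
      have key : ∀ j k, j + 1 + i ≤ n → k = j + 1 → (vineGraph V i).Adj (f j) (f k) := by
        intro j k hjn hk1
        subst hk1
        have hS : Wd g j (i+1) ∈ V := by
          have : Wd g j (i+1) ∈ lvl V (i+1) := by
            rw [hw (i+1) (by omega) (by omega)]
            exact ⟨j, by omega, rfl⟩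
          exact this.1
        have hSne : f j ≠ f (j+1) := by
          intro h
          have := hfinj j (by omega) (j+1) (by omega) h
          omega
        refine ⟨hSne, Wd g j (i+1), hS, card_Wd hg (by omega), ?_, ?_⟩
        · rw [show ((f j : Finset α)) = Wd g j i from hfval j (by omega)]
          apply coversIn_of_card (hvert j (by omega)).1 hS
          · apply lt_of_le_of_ne (Wd_mono (Finset.Ico_subset_Ico le_rfl (by omega)))
            intro h
            have := card_Wd hg (show j + i ≤ n by omega)
            have := card_Wd hg (show j + (i+1) ≤ n by omega)
            rw [h] at *; omega
          · rw [card_Wd hg (by omega), card_Wd hg (by omega)]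
        · rw [show ((f (j+1) : Finset α)) = Wd g (j+1) i from hfval (j+1) (by omega)]
          apply coversIn_of_card (hvert (j+1) (by omega)).1 hS
          · apply lt_of_le_of_ne (Wd_mono (Finset.Ico_subset_Ico (by omega) (by omega)))
            intro h
            have := card_Wd hg (show (j+1) + i ≤ n by omega)
            have := card_Wd hg (show j + (i+1) ≤ n by omega)
            rw [h] at *; omega
          · rw [card_Wd hg (by omega), card_Wd hg (by omega)]
      rcases h with rfl | rfl
      · exact key j _ (by omega) rfl
      · exact ((vineGraph V i).adj_symm (key k _ (by omega) rfl))
  refine ⟨l, ?_, ?_, ?_⟩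
  · apply List.Nodup.map_on _ List.nodup_range
    intro x hx y hy hxy
    rw [List.mem_range] at hx hy
    exact hfinj x (by omega) y (by omega) hxy
  · intro v
    obtain ⟨j, hj, rfl⟩ := hsurj v
    rw [hl]
    exact List.mem_map.mpr ⟨j, List.mem_range.mpr (by omega), rfl⟩
  · intro u v
    obtain ⟨j, hj, rfl⟩ := hsurj u
    obtain ⟨k, hk, rfl⟩ := hsurj v
    rw [hadj j hj k hk]
    constructor
    · rintro (rfl | rfl)
      · exact ⟨j, Or.inl ⟨hget j (by omega), hget (j+1) (by omega)⟩⟩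
      · exact ⟨k, Or.inr ⟨hget k (by omega), hget (k+1) (by omega)⟩⟩
    · rintro ⟨m, ⟨h1, h2⟩ | ⟨h1, h2⟩⟩
      · have hm1 : m + 1 < N := by
          by_contra h
          rw [hget' (m+1) (by omega)] at h2
          exact nomatch h2
        have hu : f m = f j := by
          have := hget m (by omega)
          rw [this] at h1
          exact Option.some.inj h1
        have hv : f (m+1) = f k := by
          have := hget (m+1) hm1
          rw [this] at h2
          exact Option.some.inj h2
        have h1' := hfinj m (by omega) j hj hu
        have h2' := hfinj (m+1) (by omega) k hk hv
        omega
      · have hm1 : m + 1 < N := by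
          by_contra h
          rw [hget' (m+1) (by omega)] at h2
          exact nomatch h2
        have hu : f m = f k := by
          have := hget m (by omega)
          rw [this] at h1
          exact Option.some.inj h1
        have hv : f (m+1) = f j := by
          have := hget (m+1) hm1
          rw [this] at h2
          exact Option.some.inj h2
        have h1' := hfinj m (by omega) k hk hu
        have h2' := hfinj (m+1) (by omega) j hj hv
        omega

end Down
section Up
set_option linter.unusedSectionVars false

variable {α : Type*} [DecidableEq α] {A : Finset α} {V : Set (Finset α)} {g : ℕ → α}

lemma lvl_eq_wins_up (hV : IsRegularVine A V) (hA : 2 ≤ A.card)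
    (hg : Set.InjOn g (Set.Iio A.card)) (hbase : lvl V 2 = wins g A.card 2) :
    ∀ i, 2 ≤ i → i ≤ A.card → lvl V i = wins g A.card i := by
  set n := A.card with hn
  intro i hi
  induction i, hi using Nat.le_induction with
  | base => intro _; exact hbase
  | succ i hi ih =>
    intro hin
    have hih := ih (by omega)
    have hsub : lvl V (i+1) ⊆ wins g n (i+1) := by
      rintro S ⟨hSV, hScard⟩
      obtain ⟨T₁, T₂, hne, hc1, hc2, hun, -⟩ := covers_pair hV hSV (by omega)
      have hT1 : T₁ ∈ lvl V i := by
        have := card_of_covers hV hc1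
        exact ⟨hc1.1, by omega⟩
      have hT2 : T₂ ∈ lvl V i := by
        have := card_of_covers hV hc2
        exact ⟨hc2.1, by omega⟩
      rw [hih] at hT1 hT2
      obtain ⟨j, hj, rfl⟩ := hT1
      obtain ⟨k, hk, rfl⟩ := hT2
      have hjk : j ≠ k := by
        intro h; exact hne (by rw [h])
      -- wlog j < k via a general claim
      have claim : ∀ j k, j + i ≤ n → k + i ≤ n → j < k →
          Wd g j i ∪ Wd g k i = S → S ∈ wins g n (i+1) := by
        intro j k hj hk hlt hun
        by_cases hcase : k ≤ j + i
        · have hIco : Finset.Ico j (j+i) ∪ Finset.Ico k (k+i) = Finset.Ico j (k+i) := by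
            ext t; simp only [Finset.mem_union, Finset.mem_Ico]; omega
          have hS : S = Wd g j (k + i - j) := by
            rw [← hun, Wd, Wd, ← Finset.image_union, hIco, Wd]
            congr 1
            congr 1
            omega
          have hcard : S.card = k + i - j := by
            rw [hS]; exact card_Wd hg (by omega)
          have : k = j + 1 := by omega
          subst this
          exact ⟨j, by omega, by rw [hS]; congr 1; omega⟩
        · exfalso
          have hk1 : g k ∉ Wd g j i := by
            intro h
            obtain ⟨t, ht1, ht2, ht3⟩ := mem_Wd.mp h
            have := hg (by simp; omega) (by simp; omega) ht3
            omega
          have hk2 : g (k+1) ∉ Wd g j i := by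
            intro h
            obtain ⟨t, ht1, ht2, ht3⟩ := mem_Wd.mp h
            have := hg (by simp; omega) (by simp; omega) ht3
            omega
          have hkk : g k ≠ g (k+1) := by
            intro h
            have := hg (by simp; omega) (by simp; omega) h
            omega
          have hsub2 : insert (g k) (insert (g (k+1)) (Wd g j i)) ⊆ S := by
            intro a ha
            rcases Finset.mem_insert.mp ha with rfl | ha
            · rw [← hun]
              exact Finset.mem_union_right _ (mem_Wd.mpr ⟨k, le_rfl, by omega, rfl⟩)
            rcases Finset.mem_insert.mp ha with rfl | ha
            · rw [← hun]
              exact Finset.mem_union_right _ (mem_Wd.mpr ⟨k+1, by omega, by omega, rfl⟩)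
            · rw [← hun]
              exact Finset.mem_union_left _ ha
          have hcard2 : (insert (g k) (insert (g (k+1)) (Wd g j i))).card = i + 2 := by
            rw [Finset.card_insert_of_notMem, Finset.card_insert_of_notMem hk2,
              card_Wd hg (by omega)]
            intro h
            rcases Finset.mem_insert.mp h with h | h
            · exact hkk h
            · exact hk1 h
          have := Finset.card_le_card hsub2
          omega
      rcases lt_or_gt_of_ne hjk with hlt | hlt
      · exact claim j k hj hk hlt hun
      · exact claim k j hk hj hlt (by rw [Finset.union_comm]; exact hun)
    apply Set.eq_of_subset_of_ncard_le hsub _ (wins_finite (by omega) (by omega))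
    rw [lvl_ncard hV hA (i+1) (by omega) (by omega), wins_ncard hg (by omega) (by omega)]

end Up
section Lists
set_option linter.unusedSectionVars false

variable {α : Type*} [DecidableEq α]

variable {c : List α} {a₀ : α} {n : ℕ}

lemma hgc_some (hlen : c.length = n) {m : ℕ} (hm : m < n) :
    (c)[m]? = some (c.getD m a₀) := by
  have hm' : m < c.length := by omega
  rw [List.getElem?_eq_some_iff]
  exact ⟨hm', (List.getD_eq_getElem c a₀ hm').symm⟩

lemma hgc_inv (hlen : c.length = n) {m : ℕ} {a : α} (h : (c)[m]? = some a) :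
    m < n ∧ c.getD m a₀ = a := by
  rw [List.getElem?_eq_some_iff] at h
  obtain ⟨hm, hget⟩ := h
  exact ⟨by omega, by rw [List.getD_eq_getElem c a₀ hm]; exact hget⟩

lemma getD_injOn (hnd : c.Nodup) (hlen : c.length = n) :
    Set.InjOn (fun t => c.getD t a₀) (Set.Iio n) := by
  intro s hs t ht h
  simp only [Set.mem_Iio] at hs ht
  have hs' : s < c.length := by omega
  have ht' : t < c.length := by omega
  simp only [List.getD_eq_getElem c a₀ hs', List.getD_eq_getElem c a₀ ht'] at h
  have := List.nodup_iff_injective_get.mp hnd (show c.get ⟨s, hs'⟩ = c.get ⟨t, ht'⟩ from h)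
  exact congrArg Fin.val this

lemma take_toFinset_eq (hlen : c.length = n) {k : ℕ} (hk : k ≤ n) :
    (c.take k).toFinset = Wd (fun t => c.getD t a₀) 0 k := by
  ext a
  rw [List.mem_toFinset, mem_Wd]
  constructor
  · intro ha
    obtain ⟨m, hm⟩ := List.mem_iff_getElem?.mp ha
    have hmk : m < k := by
      have := (List.getElem?_eq_some_iff.mp hm).1
      have : (c.take k).length = min k c.length := List.length_take
      omega
    rw [List.getElem?_take_of_lt hmk] at hm
    obtain ⟨hmn, hD⟩ := hgc_inv (a₀ := a₀) hlen hm
    exact ⟨m, by omega, by omega, hD⟩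
  · rintro ⟨t, -, ht, rfl⟩
    apply List.mem_iff_getElem?.mpr
    refine ⟨t, ?_⟩
    rw [List.getElem?_take_of_lt (by omega)]
    exact hgc_some hlen (by omega)

lemma drop_toFinset_eq (hlen : c.length = n) {j : ℕ} (hj : j ≤ n) :
    (c.drop j).toFinset = Wd (fun t => c.getD t a₀) j (n - j) := by
  ext a
  rw [List.mem_toFinset, mem_Wd]
  constructor
  · intro ha
    obtain ⟨m, hm⟩ := List.mem_iff_getElem?.mp ha
    rw [List.getElem?_drop] at hm
    obtain ⟨hmn, hD⟩ := hgc_inv (a₀ := a₀) hlen hm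
    exact ⟨j + m, by omega, by omega, hD⟩
  · rintro ⟨t, ht1, ht2, rfl⟩
    apply List.mem_iff_getElem?.mpr
    refine ⟨t - j, ?_⟩
    rw [List.getElem?_drop]
    have : j + (t - j) = t := by omega
    rw [this]
    exact hgc_some hlen (by omega)

end Lists
section Main
set_option linter.unusedSectionVars false

variable {α : Type*} [DecidableEq α] {A : Finset α} {V : Set (Finset α)}

lemma Wd_two {g : ℕ → α} (m : ℕ) : Wd g m 2 = insert (g m) {g (m+1)} := by
  have hIco : Finset.Ico m (m+2) = insert m {m+1} := by
    ext t; simp only [Finset.mem_Ico, Finset.mem_insert, Finset.mem_singleton]; omega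
  rw [Wd, hIco, Finset.image_insert, Finset.image_singleton]

lemma Wd_one {g : ℕ → α} (m : ℕ) : Wd g m 1 = {g m} := by
  have hIco : Finset.Ico m (m+1) = {m} := by
    ext t; simp only [Finset.mem_Ico, Finset.mem_singleton]; omega
  rw [Wd, hIco, Finset.image_singleton]

lemma vine_backward (hV : IsRegularVine A V) (hA : 2 ≤ A.card)
    (h : ∃ c : List α, c.Nodup ∧ c.toFinset = A ∧ ∀ k, 1 ≤ k → k ≤ A.card →
      (c.take k).toFinset ∈ V ∧ (c.drop (A.card - k)).toFinset ∈ V) : IsDVine A V := by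
  obtain ⟨c, hnd, hctf, hch⟩ := h
  set n := A.card with hn
  have hlen : c.length = n := by
    have := List.toFinset_card_of_nodup hnd
    rw [hctf] at this
    omega
  obtain ⟨a₀, -⟩ := Finset.card_pos.mp (show 0 < A.card by omega)
  set g : ℕ → α := fun t => c.getD t a₀ with hgdef
  have hg : Set.InjOn g (Set.Iio n) := getD_injOn hnd hlen
  have hpre : ∀ k, 1 ≤ k → k ≤ n → Wd g 0 k ∈ V ∧ Wd g (n - k) k ∈ V := by
    intro k h1 h2
    obtain ⟨ht, hd⟩ := hch k h1 h2
    constructor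
    · rwa [take_toFinset_eq (a₀ := a₀) hlen h2] at ht
    · rw [drop_toFinset_eq (a₀ := a₀) hlen (by omega)] at hd
      have heq : n - (n - k) = k := by omega
      rwa [heq] at hd
  have hw := lvl_eq_wins_down hV hA hg hpre
  exact ⟨hV, path_of_wins hV hA hg hw⟩

lemma vine_forward (hV : IsRegularVine A V) (hA : 2 ≤ A.card) (hD : IsDVine A V) :
    ∃ c : List α, c.Nodup ∧ c.toFinset = A ∧ ∀ k, 1 ≤ k → k ≤ A.card →
      (c.take k).toFinset ∈ V ∧ (c.drop (A.card - k)).toFinset ∈ V := by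
  classical
  set n := A.card with hn
  obtain ⟨l, hlnd, hlcov, hliff⟩ := hD.2 1 le_rfl (by omega)
  have hel0 : ∀ S : {S : Finset α // S ∈ V ∧ S.card = 1}, ∃ a, S.1 = {a} :=
    fun S => Finset.card_eq_one.mp S.2.2
  choose el hel using hel0
  have helinj : Function.Injective el := by
    intro x y h
    apply Subtype.ext
    rw [hel x, hel y, h]
  set c : List α := l.map el with hc
  have hnd : c.Nodup := hlnd.map helinj
  have hctf : c.toFinset = A := by
    ext a
    rw [List.mem_toFinset]
    constructor
    · intro ha
      obtain ⟨v, hv, rfl⟩ := List.mem_map.mp ha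
      have : el v ∈ v.1 := by rw [hel v]; exact Finset.mem_singleton_self _
      exact (hV.1 v.1 v.2.1).1 this
    · intro ha
      have hsm : ({a} : Finset α) ∈ V := singleton_mem hV ha
      set v : {S : Finset α // S ∈ V ∧ S.card = 1} := ⟨{a}, hsm, Finset.card_singleton a⟩
        with hv
      have hva : el v = a := by
        have h2 : ({a} : Finset α) = {el v} := hel v
        exact (Finset.singleton_inj.mp h2).symm
      exact List.mem_map.mpr ⟨v, hlcov v, hva⟩
  have hlen : c.length = n := by
    have := List.toFinset_card_of_nodup hnd
    rw [hctf] at this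
    omega
  have hllen : l.length = n := by
    rw [hc, List.length_map] at hlen
    exact hlen
  obtain ⟨a₀, -⟩ := Finset.card_pos.mp (show 0 < A.card by omega)
  set g : ℕ → α := fun t => c.getD t a₀ with hgdef
  have hg : Set.InjOn g (Set.Iio n) := getD_injOn hnd hlen
  -- the t-th vertex of the path is the singleton {g t}
  have hvert : ∀ t, t < n → ∃ v : {S : Finset α // S ∈ V ∧ S.card = 1},
      l[t]? = some v ∧ v.1 = {g t} := by
    intro t ht
    have hlt : t < l.length := by omega
    refine ⟨l.get ⟨t, hlt⟩, List.getElem?_eq_getElem hlt, ?_⟩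
    have h1 : (c)[t]? = some (el (l.get ⟨t, hlt⟩)) := by
      rw [List.get_eq_getElem, hc, List.getElem?_map, List.getElem?_eq_getElem hlt, Option.map_some]
    have h2 : (c)[t]? = some (g t) := hgc_some hlen ht
    have h3 : el (l.get ⟨t, hlt⟩) = g t := by
      rw [h1] at h2
      exact Option.some.inj h2
    rw [hel (l.get ⟨t, hlt⟩), h3]
  have hgA : ∀ t, t < n → g t ∈ A := by
    intro t ht
    rw [← hctf, List.mem_toFinset, List.mem_iff_getElem?]
    exact ⟨t, hgc_some hlen ht⟩
  -- base case: level 2 consists of the consecutive pairs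
  have hbase : lvl V 2 = wins g n 2 := by
    ext S
    constructor
    · rintro ⟨hSV, hS2⟩
      obtain ⟨T₁, T₂, hne, hc1, hc2, hun, -⟩ := covers_pair hV hSV (by omega)
      have hcard1 : T₁.card = 1 := by have := card_of_covers hV hc1; omega
      have hcard2 : T₂.card = 1 := by have := card_of_covers hV hc2; omega
      set u : {S : Finset α // S ∈ V ∧ S.card = 1} := ⟨T₁, hc1.1, hcard1⟩ with hu
      set v : {S : Finset α // S ∈ V ∧ S.card = 1} := ⟨T₂, hc2.1, hcard2⟩ with hvv
      have hadj : (vineGraph V 1).Adj u v := by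
        refine ⟨fun h => hne (congrArg Subtype.val h), S, hSV, by omega, hc1, hc2⟩
      obtain ⟨m, hcase⟩ := (hliff u v).mp hadj
      have hmem : ∀ m, l[m]? = some u → l[m+1]? = some v →
          S ∈ wins g n 2 := by
        intro m h1 h2
        have hm1 : m + 1 < n := by
          have := (List.getElem?_eq_some_iff.mp h2).1
          omega
        obtain ⟨w1, hw1, hw1v⟩ := hvert m (by omega)
        obtain ⟨w2, hw2, hw2v⟩ := hvert (m+1) hm1
        have e1 : u = w1 := by rw [hw1] at h1; exact (Option.some.inj h1).symm
        have e2 : v = w2 := by rw [hw2] at h2; exact (Option.some.inj h2).symm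
        have hT1 : T₁ = {g m} := by rw [show T₁ = u.1 from rfl, e1, hw1v]
        have hT2 : T₂ = {g (m+1)} := by rw [show T₂ = v.1 from rfl, e2, hw2v]
        refine ⟨m, by omega, ?_⟩
        rw [← hun, hT1, hT2, Wd_two, ← Finset.insert_eq]
      rcases hcase with ⟨h1, h2⟩ | ⟨h1, h2⟩
      · exact hmem m h1 h2
      · -- swapped : use symmetry of the union
        have hmem' : ∀ m, l[m]? = some v → l[m+1]? = some u →
            S ∈ wins g n 2 := by
          intro m h1 h2
          have hm1 : m + 1 < n := by
            have := (List.getElem?_eq_some_iff.mp h2).1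
            omega
          obtain ⟨w1, hw1, hw1v⟩ := hvert m (by omega)
          obtain ⟨w2, hw2, hw2v⟩ := hvert (m+1) hm1
          have e1 : v = w1 := by rw [hw1] at h1; exact (Option.some.inj h1).symm
          have e2 : u = w2 := by rw [hw2] at h2; exact (Option.some.inj h2).symm
          have hT2 : T₂ = {g m} := by rw [show T₂ = v.1 from rfl, e1, hw1v]
          have hT1 : T₁ = {g (m+1)} := by rw [show T₁ = u.1 from rfl, e2, hw2v]
          refine ⟨m, by omega, ?_⟩
          rw [← hun, hT1, hT2, Wd_two, Finset.union_comm, ← Finset.insert_eq]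
        exact hmem' m h1 h2
    · rintro ⟨j, hj, rfl⟩
      obtain ⟨v₁, hv1, hv1v⟩ := hvert j (by omega)
      obtain ⟨v₂, hv2, hv2v⟩ := hvert (j+1) (by omega)
      have hadj : (vineGraph V 1).Adj v₁ v₂ :=
        (hliff v₁ v₂).mpr ⟨j, Or.inl ⟨hv1, hv2⟩⟩
      obtain ⟨hne', W, hWV, hW2, hcu, hcv⟩ := hadj
      have hsub : Wd g j 2 ⊆ W := by
        rw [Wd_two]
        apply Finset.insert_subset
        · have := hcu.2.2.1.1
          rw [hv1v] at this
          exact this (Finset.mem_singleton_self _)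
        · have := hcv.2.2.1.1
          rw [hv2v] at this
          intro a ha
          rw [Finset.mem_singleton] at ha
          subst ha
          exact this (Finset.mem_singleton_self _)
      have hWeq : Wd g j 2 = W := by
        apply Finset.eq_of_subset_of_card_le hsub
        rw [card_Wd hg hj, hW2]
      exact ⟨by rw [hWeq]; exact hWV, by rw [card_Wd hg hj]⟩
  have hup := lvl_eq_wins_up hV hA hg hbase
  refine ⟨c, hnd, hctf, ?_⟩
  intro k hk1 hkn
  constructor
  · rw [take_toFinset_eq (a₀ := a₀) hlen hkn]
    rcases eq_or_lt_of_le hk1 with h1 | h1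
    · rw [← h1, Wd_one]
      exact singleton_mem hV (hgA 0 (by omega))
    · have : Wd g 0 k ∈ lvl V k := by
        rw [hup k (by omega) hkn]
        exact ⟨0, by omega, rfl⟩
      exact this.1
  · rw [drop_toFinset_eq (a₀ := a₀) hlen (by omega)]
    have heq : n - (n - k) = k := by omega
    rw [heq]
    rcases eq_or_lt_of_le hk1 with h1 | h1
    · rw [← h1, Wd_one]
      exact singleton_mem hV (hgA (n-1) (by omega))
    · have : Wd g (n-k) k ∈ lvl V k := by
        rw [hup k (by omega) hkn]
        exact ⟨n - k, by omega, rfl⟩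
      exact this.1

end Main

/-- A regular vine `V` on `A` with `|A| ≥ 2` is a D-vine if and only if, after
a suitable enumeration `c₁, …, cₙ` of `A`, both
`{c₁} ⊆ {c₁, c₂} ⊆ ⋯ ⊆ A` and `{cₙ} ⊆ {cₙ₋₁, cₙ} ⊆ ⋯ ⊆ A` are (maximal)
chains in `V`. -/
theorem dvine_iff_two_chains (A : Finset α) (V : Set (Finset α))
    (hV : IsRegularVine A V) (hA : 2 ≤ A.card) :
    IsDVine A V ↔
      ∃ c : List α, c.Nodup ∧ c.toFinset = A ∧
        ∀ k : ℕ, 1 ≤ k → k ≤ A.card →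
          (c.take k).toFinset ∈ V ∧ (c.drop (A.card - k)).toFinset ∈ V := by
  exact ⟨vine_forward hV hA, vine_backward hV hA⟩
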